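/- arXiv:2512.17606 — 2 statements merged into one kernel-verified Lean document; each statement's English description precedes it below -/
import Mathlib

section
/- Let u be a unit vector in ℝ^d and f : u^⊥ → ℝ a Lipschitz function. If f is semiconcave on u^⊥ ∩ B(w₀, δ) for some δ > 0, where w₀ = π_{u^⊥}(a) and a ∈ ∂(hyp_u f), then reach(hyp_u f, a) > 0. -/
open Metric Set MeasureTheory
open scoped RealInnerProductSpace ENNReal NNReal

noncomputable section

abbrev Euc (d : ℕ) := EuclideanSpace ℝ (Fin d)

/-- Points of the ambient space having a unique nearest point in `A`. -/
def unp {d : ℕ} (A : Set (Euc d)) : Set (Euc d) :=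
  {x | ∃! a, a ∈ A ∧ dist x a = Metric.infDist x A}

/-- Federer's local reach `reach (A, a)`. -/
def reachAt {d : ℕ} (A : Set (Euc d)) (a : Euc d) : ℝ≥0∞ :=
  sSup {r : ℝ≥0∞ | ∀ x : Euc d, edist x a < r → x ∈ unp A}

/-- Federer's reach of a set. -/
def reach {d : ℕ} (A : Set (Euc d)) : ℝ≥0∞ := ⨅ a ∈ A, reachAt A a

/-- The tangent cone of `A` at `a`: `u` is a tangent vector iff `u = 0` or `u` is a limit of
`r i • (x i - a)` with `x i ∈ A \ {a}`, `x i → a`, `r i > 0`. -/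
def tanCone {d : ℕ} (A : Set (Euc d)) (a : Euc d) : Set (Euc d) :=
  {u | u = 0 ∨ ∃ (x : ℕ → Euc d) (r : ℕ → ℝ),
    (∀ n, x n ∈ A ∧ x n ≠ a) ∧
    Filter.Tendsto x Filter.atTop (nhds a) ∧
    (∀ n, 0 < r n) ∧
    Filter.Tendsto (fun n => r n • (x n - a)) Filter.atTop (nhds u)}

/-- The dimension of the tangent cone of `A` at `a`. -/
def tanDim {d : ℕ} (A : Set (Euc d)) (a : Euc d) : ℕ :=
  Module.finrank ℝ (Submodule.span ℝ (tanCone A a))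

/-- The set of points of `A` at which the tangent cone has dimension `k`. -/
def Tk {d : ℕ} (A : Set (Euc d)) (k : ℕ) : Set (Euc d) :=
  {x | x ∈ A ∧ tanDim A x = k}

/-- Whitney's fullness `Θ(σ) = vol_k(σ) / (diam σ)^k` of a set. -/
def fullness {d : ℕ} (k : ℕ) (s : Set (Euc d)) : ℝ :=
  (μH[(k : ℝ)] s).toReal / (Metric.diam s) ^ k

/-- The metric `ρ_k` on the Grassmannian of subspaces of `ℝ^d`. -/
def grassDist {d : ℕ} (U V : Submodule ℝ (Euc d)) : ℝ :=
  max (sSup ((fun u => Metric.infDist u (V : Set (Euc d))) '' {u | u ∈ U ∧ ‖u‖ = 1}))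
      (sSup ((fun v => Metric.infDist v (U : Set (Euc d))) '' {v | v ∈ V ∧ ‖v‖ = 1}))

/-- The `u`-hypograph of a function defined on the hyperplane `u^⊥`. -/
def hypographOn {d : ℕ} (u : Euc d)
    (f : ((Submodule.span ℝ {u})ᗮ : Submodule ℝ (Euc d)) → ℝ) : Set (Euc d) :=
  {x | ∃ (w : ((Submodule.span ℝ {u})ᗮ : Submodule ℝ (Euc d))) (t : ℝ),
    t ≤ f w ∧ x = (w : Euc d) + t • u}

section hypHelpers

variable {d : ℕ} {u : Euc d}

lemma inner_coe_u (w : ((Submodule.span ℝ {u})ᗮ : Submodule ℝ (Euc d))) :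
    ⟪(w : Euc d), u⟫ = 0 := by
  have h := (Submodule.mem_orthogonal _ _).1 w.2 u (Submodule.mem_span_singleton_self u)
  rwa [real_inner_comm] at h

lemma decomp (hu : ‖u‖ = 1) (x : Euc d) :
    x = (Submodule.orthogonalProjectionOnto ((Submodule.span ℝ {u})ᗮ) x : Euc d) + ⟪x, u⟫ • u := by
  have h := Submodule.starProjection_add_starProjection_orthogonal (K := Submodule.span ℝ {u}) x
  rw [Submodule.starProjection_singleton, hu] at h
  simp only [Submodule.starProjection_apply, one_pow, RCLike.ofReal_one, div_one] at h
  rw [real_inner_comm]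
  linear_combination (norm := module) -h

lemma proj_add_smul (w : ((Submodule.span ℝ {u})ᗮ : Submodule ℝ (Euc d))) (t : ℝ) :
    Submodule.orthogonalProjectionOnto ((Submodule.span ℝ {u})ᗮ) ((w : Euc d) + t • u) = w := by
  have hw : Submodule.orthogonalProjectionOnto ((Submodule.span ℝ {u})ᗮ) (w : Euc d) = w :=
    Submodule.orthogonalProjectionOnto_mem_subspace_eq_self w
  have hu0 : Submodule.orthogonalProjectionOnto ((Submodule.span ℝ {u})ᗮ) u = 0 := by
    apply Submodule.orthogonalProjectionOnto_apply_of_mem_orthogonal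
    rw [Submodule.orthogonal_orthogonal]
    exact Submodule.mem_span_singleton_self u
  rw [map_add, ContinuousLinearMap.map_smul, hw, hu0, smul_zero, add_zero]

lemma inner_split (hu : ‖u‖ = 1) (w₁ w₂ : ((Submodule.span ℝ {u})ᗮ : Submodule ℝ (Euc d)))
    (s₁ s₂ : ℝ) :
    ⟪(w₁ : Euc d) + s₁ • u, (w₂ : Euc d) + s₂ • u⟫ = ⟪w₁, w₂⟫ + s₁ * s₂ := by
  have huu : ⟪u, u⟫ = 1 := by
    rw [real_inner_self_eq_norm_sq, hu]; norm_num
  rw [inner_add_left, inner_add_right, inner_add_right, real_inner_smul_left,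
    real_inner_smul_left, real_inner_smul_right, real_inner_smul_right,
    inner_coe_u w₁, huu, real_inner_comm ((w₂ : Euc d)) u, inner_coe_u w₂,
    Submodule.coe_inner]
  ring

lemma inner_add_smul_u (hu : ‖u‖ = 1) (w : ((Submodule.span ℝ {u})ᗮ : Submodule ℝ (Euc d)))
    (t : ℝ) : ⟪(w : Euc d) + t • u, u⟫ = t := by
  rw [inner_add_left, real_inner_smul_left, inner_coe_u w, real_inner_self_eq_norm_sq, hu]
  ring

lemma norm_add_smul_u (hu : ‖u‖ = 1) (w : ((Submodule.span ℝ {u})ᗮ : Submodule ℝ (Euc d)))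
    (t : ℝ) : ‖(w : Euc d) + t • u‖ ^ 2 = ‖w‖ ^ 2 + t ^ 2 := by
  rw [← real_inner_self_eq_norm_sq, inner_split hu w w t t, ← real_inner_self_eq_norm_sq]
  ring

lemma mem_hyp (hu : ‖u‖ = 1) (f : ((Submodule.span ℝ {u})ᗮ : Submodule ℝ (Euc d)) → ℝ)
    (x : Euc d) :
    x ∈ hypographOn u f ↔ ⟪x, u⟫ ≤ f (Submodule.orthogonalProjectionOnto ((Submodule.span ℝ {u})ᗮ) x) := by
  constructor
  · rintro ⟨w, t, ht, rfl⟩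
    rwa [inner_add_smul_u hu, proj_add_smul]
  · intro h
    exact ⟨_, _, h, decomp hu x⟩

lemma closed_hyp (hu : ‖u‖ = 1) {K : ℝ≥0}
    {f : ((Submodule.span ℝ {u})ᗮ : Submodule ℝ (Euc d)) → ℝ}
    (hf : LipschitzWith K f) : IsClosed (hypographOn u f) := by
  have he : hypographOn u f =
      {x : Euc d | ⟪x, u⟫ ≤ f (Submodule.orthogonalProjectionOnto ((Submodule.span ℝ {u})ᗮ) x)} :=
    Set.ext (mem_hyp hu f)
  rw [he]
  exact isClosed_le (continuous_id.inner continuous_const)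
    (hf.continuous.comp (Submodule.orthogonalProjectionOnto ((Submodule.span ℝ {u})ᗮ)).continuous)

lemma proj_dist_le (z₁ z₂ : Euc d) :
    dist (Submodule.orthogonalProjectionOnto ((Submodule.span ℝ {u})ᗮ) z₁)
      (Submodule.orthogonalProjectionOnto ((Submodule.span ℝ {u})ᗮ) z₂) ≤ dist z₁ z₂ := by
  set T := Submodule.orthogonalProjectionOnto ((Submodule.span ℝ {u})ᗮ)
  have h1 : dist (T z₁) (T z₂) = ‖T (z₁ - z₂)‖ := by
    rw [dist_eq_norm, ← map_sub]
  rw [h1, dist_eq_norm]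
  calc ‖T (z₁ - z₂)‖ ≤ ‖T‖ * ‖z₁ - z₂‖ := T.le_opNorm _
    _ ≤ 1 * ‖z₁ - z₂‖ :=
        mul_le_mul_of_nonneg_right (Submodule.orthogonalProjectionOnto_norm_le _) (norm_nonneg _)
    _ = ‖z₁ - z₂‖ := one_mul _

end hypHelpers

lemma norm_add_smul_sq' {E : Type*} [NormedAddCommGroup E] [InnerProductSpace ℝ E]
    (a b : E) (τ : ℝ) : ‖a + τ • b‖ ^ 2 = ‖a‖ ^ 2 + 2 * τ * ⟪a, b⟫ + τ ^ 2 * ‖b‖ ^ 2 := by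
  rw [← real_inner_self_eq_norm_sq, ← real_inner_self_eq_norm_sq, ← real_inner_self_eq_norm_sq,
    inner_add_left, inner_add_right, inner_add_right, real_inner_smul_left,
    real_inner_smul_left, real_inner_smul_right, real_inner_smul_right, real_inner_comm b a]
  ring

lemma superg {E : Type*} [NormedAddCommGroup E] [InnerProductSpace ℝ E]
    {K : ℝ≥0} {f : E → ℝ}
    {c δ : ℝ} (hc : 0 ≤ c) {w₀ : E}
    (hconc : ConcaveOn ℝ (Metric.ball w₀ δ) (fun w => f w - c / 2 * ‖w‖ ^ 2))
    (v w : E) (m : ℝ) (hm : 0 ≤ m)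
    (hNPI : ∀ w' : E, 2 * ⟪v, w' - w⟫ + 2 * m * (f w' - f w) ≤ (1 + (K:ℝ)^2) * ‖w' - w‖ ^ 2)
    (hw : w ∈ Metric.ball w₀ δ) (w' : E) (hw' : w' ∈ Metric.ball w₀ δ) :
    ⟪v, w' - w⟫ + m * (f w' - f w) ≤ m * c / 2 * ‖w' - w‖ ^ 2 := by
  set h := w' - w with hh
  set C : ℝ := (1 + (K:ℝ)^2 + m*c) * ‖h‖^2 with hC
  have hC0 : 0 ≤ C := by positivity
  set X : ℝ := 2 * ⟪v, h⟫ + 2 * m * (f w' - f w) - m * c * ‖h‖^2 with hX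
  have hτ : ∀ τ : ℝ, 0 < τ → τ ≤ 1 → X ≤ τ * C := by
    intro τ hτ0 hτ1
    set wτ := w + τ • h with hwτ
    have hcomb : (1-τ) • w + τ • w' = wτ := by rw [hwτ, hh]; module
    have hwτmem : wτ ∈ Metric.ball w₀ δ := by
      rw [← hcomb]
      exact (convex_ball w₀ δ) hw hw' (by linarith) (le_of_lt hτ0) (by ring)
    have hNP := hNPI wτ
    have e1 : wτ - w = τ • h := by rw [hwτ]; abel
    rw [e1, real_inner_smul_right] at hNP
    have e2 : ‖τ • h‖^2 = τ^2 * ‖h‖^2 := by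
      rw [norm_smul, Real.norm_eq_abs, mul_pow, sq_abs]
    rw [e2] at hNP
    have hcc := hconc.2 hw hw' (by linarith : (0:ℝ) ≤ 1 - τ) (le_of_lt hτ0) (by ring)
    rw [hcomb] at hcc
    simp only [smul_eq_mul] at hcc
    have nw' : ‖w'‖^2 = ‖w‖^2 + 2*⟪w, h⟫ + ‖h‖^2 := by
      have hwe : w' = w + (1:ℝ) • h := by rw [hh]; module
      rw [hwe, norm_add_smul_sq']; ring
    have nwτ : ‖wτ‖^2 = ‖w‖^2 + 2*τ*⟪w, h⟫ + τ^2*‖h‖^2 := norm_add_smul_sq' w h τ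
    have hconcave : f wτ - f w ≥ τ * (f w' - f w) - c/2 * τ * (1-τ) * ‖h‖^2 := by
      rw [nw'] at hcc; rw [nwτ] at hcc; nlinarith [hcc]
    have hmc : 0 ≤ m * c * τ^2 * ‖h‖^2 := by positivity
    have key : τ * X ≤ τ * (τ * C) := by
      nlinarith [mul_le_mul_of_nonneg_left hconcave (by linarith : (0:ℝ) ≤ 2*m), hmc, hNP]
    exact (mul_le_mul_iff_right₀ hτ0).mp key
  have hX0 : X ≤ 0 := by
    by_contra hpos
    push_neg at hpos
    have h1 : 0 < X / (2*(C+1)) := div_pos hpos (by linarith)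
    have h2 := hτ (min 1 (X / (2*(C+1)))) (lt_min one_pos h1) (min_le_left _ _)
    have h3 : min 1 (X / (2*(C+1))) * C ≤ X / (2*(C+1)) * C :=
      mul_le_mul_of_nonneg_right (min_le_right _ _) hC0
    have h4 : X ≤ X / (2*(C+1)) * C := le_trans h2 h3
    rw [div_mul_eq_mul_div, le_div_iff₀ (by linarith : (0:ℝ) < 2*(C+1))] at h4
    nlinarith
  nlinarith [hX0]
set_option maxHeartbeats 2000000 in
theorem stmt15 {d : ℕ} (u : Euc d) (hu : ‖u‖ = 1)
    (f : ((Submodule.span ℝ {u})ᗮ : Submodule ℝ (Euc d)) → ℝ)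
    (hf : ∃ K : ℝ≥0, LipschitzWith K f)
    (a : Euc d) (ha : a ∈ frontier (hypographOn u f))
    (δ : ℝ) (hδ : 0 < δ)
    (hsc : ∃ c : ℝ, 0 ≤ c ∧
      ConcaveOn ℝ (Metric.ball (Submodule.orthogonalProjection (Submodule.span ℝ {u})ᗮ a) δ)
        (fun w => f w - c / 2 * ‖w‖ ^ 2)) :
    0 < reachAt (hypographOn u f) a := by
  classical
  obtain ⟨K, hK⟩ := hf
  obtain ⟨c, hc0, hconc⟩ := hsc
  have hAclosed : IsClosed (hypographOn u f) := closed_hyp hu hK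
  have haA : a ∈ hypographOn u f := by
    have h1 : a ∈ closure (hypographOn u f) := ha.1
    rwa [hAclosed.closure_eq] at h1
  set w₀ := Submodule.orthogonalProjectionOnto ((Submodule.span ℝ {u})ᗮ) a with hw₀
  set r : ℝ := min (δ/4) (c+1)⁻¹ with hrdef
  have hr0 : 0 < r := lt_min (by linarith) (by positivity)
  have hrδ : r ≤ δ/4 := min_le_left _ _
  have hrc : r * c ≤ 1 := by
    have h1 : r ≤ (c+1)⁻¹ := min_le_right _ _
    have h2 : r * c ≤ (c+1)⁻¹ * c := mul_le_mul_of_nonneg_right h1 hc0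
    have h3 : (c+1)⁻¹ * c ≤ 1 := by
      rw [inv_mul_le_iff₀ (by linarith)]
      linarith
    linarith
  have main : ∀ x : Euc d, dist x a < r/2 → x ∈ unp (hypographOn u f) := by
    intro x hx
    simp only [unp, Set.mem_setOf_eq]
    by_cases hxA : x ∈ hypographOn u f
    · refine ⟨x, ⟨hxA, by rw [dist_self, infDist_zero_of_mem hxA]⟩, ?_⟩
      rintro b ⟨hbA, hbd⟩
      have hb0 : dist x b = 0 := by rw [hbd, infDist_zero_of_mem hxA]
      exact (dist_eq_zero.mp hb0).symm
    · set dA := infDist x (hypographOn u f) with hdAdef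
      have hdAd : dA ≤ dist x a := infDist_le_dist_of_mem haA
      have hdAr : dA < r/2 := lt_of_le_of_lt hdAd hx
      have hdA0 : 0 ≤ dA := infDist_nonneg
      clear_value dA
      have key : ∀ b, b ∈ hypographOn u f → dist x b = dA →
          ∀ p ∈ hypographOn u f, 2*r*⟪x - b, p - b⟫ ≤ dA * ‖p - b‖^2 := by
        intro b hbA hbdist p hpA
        set y := Submodule.orthogonalProjectionOnto ((Submodule.span ℝ {u})ᗮ) x with hy
        set s : ℝ := ⟪x, u⟫ with hs
        set w := Submodule.orthogonalProjectionOnto ((Submodule.span ℝ {u})ᗮ) b with hw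
        set tb : ℝ := ⟪b, u⟫ with htbdef
        have hxd : x = (y : Euc d) + s • u := decomp hu x
        have hbd2 : b = (w : Euc d) + tb • u := decomp hu b
        have htbf : tb ≤ f w := (mem_hyp hu f b).1 hbA
        have hxf : f y < s := by
          by_contra hcon
          push_neg at hcon
          exact hxA ((mem_hyp hu f x).2 hcon)
        clear_value y s w tb
        -- nearest point inequality
        have NPI : ∀ (w' : ((Submodule.span ℝ {u})ᗮ : Submodule ℝ (Euc d))) (t' : ℝ),
            t' ≤ f w' → ‖y - w‖^2 + (s - tb)^2 ≤ ‖y - w'‖^2 + (s - t')^2 := by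
          intro w' t' ht'
          have hp' : ((w' : Euc d) + t' • u) ∈ hypographOn u f := ⟨w', t', ht', rfl⟩
          have hle : dist x b ≤ dist x ((w' : Euc d) + t' • u) := by
            rw [hbdist, hdAdef]
            exact infDist_le_dist_of_mem hp'
          have hsq := pow_le_pow_left₀ dist_nonneg hle 2
          have d1 : dist x b ^ 2 = ‖y - w‖^2 + (s - tb)^2 := by
            rw [dist_eq_norm]
            have e : x - b = ((y - w : ((Submodule.span ℝ {u})ᗮ : Submodule ℝ (Euc d))) : Euc d)
                + (s - tb) • u := by
              rw [Submodule.coe_sub]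
              nth_rewrite 1 [hxd]
              nth_rewrite 1 [hbd2]
              module
            rw [e, norm_add_smul_u hu]
          have d2 : dist x ((w' : Euc d) + t' • u) ^ 2 = ‖y - w'‖^2 + (s - t')^2 := by
            rw [dist_eq_norm]
            have e : x - ((w' : Euc d) + t' • u) =
                ((y - w' : ((Submodule.span ℝ {u})ᗮ : Submodule ℝ (Euc d))) : Euc d)
                + (s - t') • u := by
              rw [Submodule.coe_sub]
              nth_rewrite 1 [hxd]
              module
            rw [e, norm_add_smul_u hu]
          rw [d1, d2] at hsq
          exact hsq
        -- s > f w
        have hsfw : f w < s := by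
          by_contra hcon
          push_neg at hcon
          have hstb : s = tb := by
            have h0 := NPI w s hcon
            have h2 : (s - tb)^2 = 0 := le_antisymm (by linarith [h0]) (sq_nonneg _)
            have h3 : s - tb = 0 := (pow_eq_zero_iff two_ne_zero).mp h2
            linarith
          have hyw : y ≠ w := by
            intro hcon2
            rw [hcon2] at hxf
            linarith
          set τ : ℝ := min 1 (1/(1+(K:ℝ)^2)) with hτdef
          have hτ0 : 0 < τ := lt_min one_pos (by positivity)
          have hτ1 : τ ≤ 1 := min_le_left _ _
          have hτK : τ * (1+(K:ℝ)^2) ≤ 1 := by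
            have h1 := min_le_right 1 (1/(1+(K:ℝ)^2))
            have h2 : (0:ℝ) < 1+(K:ℝ)^2 := by positivity
            rw [← le_div_iff₀ h2]
            exact h1
          set w' := w + τ • (y - w) with hw'def
          have ht' : min s (f w') ≤ f w' := min_le_right _ _
          have h0 := NPI w' (min s (f w')) ht'
          have hlip : |f w' - f w| ≤ (K:ℝ) * (τ * ‖y - w‖) := by
            have h1 := hK.dist_le_mul w' w
            rw [Real.dist_eq] at h1
            have h2 : dist w' w = τ * ‖y - w‖ := by
              rw [dist_eq_norm]
              have e : w' - w = τ • (y - w) := by rw [hw'def]; abel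
              rw [e, norm_smul, Real.norm_eq_abs, abs_of_pos hτ0]
            rw [h2] at h1
            exact h1
          have hminb : (s - min s (f w'))^2 ≤ ((K:ℝ) * (τ * ‖y - w‖))^2 := by
            rcases le_total s (f w') with hc1 | hc1
            · rw [min_eq_left hc1]
              simpa using sq_nonneg ((K:ℝ) * (τ * ‖y - w‖))
            · rw [min_eq_right hc1]
              have h1 : s - f w' ≤ f w - f w' := by linarith
              have h2 : f w - f w' ≤ |f w' - f w| := by
                rw [abs_sub_comm]
                exact le_abs_self _
              have h3 : 0 ≤ s - f w' := by linarith
              have h4 : s - f w' ≤ (K:ℝ) * (τ * ‖y - w‖) := le_trans (le_trans h1 h2) hlip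
              have h5 := mul_self_le_mul_self h3 h4
              linarith [h5]
          have hnw' : ‖y - w'‖^2 = (1-τ)^2 * ‖y - w‖^2 := by
            have e : y - w' = (1-τ) • (y - w) := by rw [hw'def]; module
            rw [e, norm_smul, Real.norm_eq_abs, abs_of_nonneg (by linarith : (0:ℝ) ≤ 1-τ),
              mul_pow]
          have hv0 : 0 < ‖y - w‖ := by
            rw [norm_pos_iff]
            exact sub_ne_zero.mpr hyw
          have h5 : τ^2 * (1+(K:ℝ)^2) ≤ τ := by
            have h5a := mul_le_mul_of_nonneg_left hτK (le_of_lt hτ0)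
            linarith [h5a]
          have h6 := mul_le_mul_of_nonneg_right h5 (sq_nonneg ‖y - w‖)
          have hz : (s - tb)^2 = 0 := by rw [hstb, sub_self]; ring
          linarith [h0, hminb, hnw', h6, mul_pos hτ0 (mul_pos hv0 hv0), hz]
        -- tb = f w
        have htbeq : tb = f w := by
          by_contra hne
          have hlt : tb < f w := lt_of_le_of_ne htbf hne
          have h0 := NPI w (f w) le_rfl
          have e1 : (s - tb)^2 - (s - f w)^2 = (f w - tb)*((s - f w)+(s - tb)) := by ring
          have e2 : (0:ℝ) < (f w - tb)*((s - f w)+(s - tb)) :=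
            mul_pos (by linarith) (by linarith)
          linarith [h0]
        set m : ℝ := s - f w with hmdef
        have hm0 : 0 < m := by rw [hmdef]; linarith
        clear_value m
        -- expanded NPI
        have hNPIe : ∀ w' : ((Submodule.span ℝ {u})ᗮ : Submodule ℝ (Euc d)),
            2 * ⟪y - w, w' - w⟫ + 2 * m * (f w' - f w) ≤ (1+(K:ℝ)^2) * ‖w' - w‖^2 := by
          intro w'
          have h0 := NPI w' (f w') le_rfl
          rw [htbeq] at h0
          have e1 : ‖y - w'‖^2 = ‖y - w‖^2 - 2*⟪y - w, w' - w⟫ + ‖w' - w‖^2 := by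
            have e : y - w' = (y - w) + (-1:ℝ) • (w' - w) := by module
            rw [e, norm_add_smul_sq']
            ring
          have hlip : (f w' - f w)^2 ≤ (K:ℝ)^2 * ‖w' - w‖^2 := by
            have h1 := hK.dist_le_mul w' w
            rw [Real.dist_eq, dist_eq_norm] at h1
            have h4 := mul_self_le_mul_self (abs_nonneg (f w' - f w)) h1
            rw [abs_mul_abs_self] at h4
            linarith [h4]
          have e2 : (s - f w')^2 = (s - f w)^2 - 2*m*(f w' - f w) + (f w' - f w)^2 := by
            rw [hmdef]; ring
          linarith [h0, e1, e2, hlip]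
        -- locations
        have hwball : w ∈ Metric.ball w₀ δ := by
          rw [Metric.mem_ball]
          have h1 : dist w w₀ ≤ dist b a := by rw [hw, hw₀]; exact proj_dist_le b a
          have h2 : dist b a ≤ dist b x + dist x a := dist_triangle b x a
          have h3 : dist b x = dA := by rw [dist_comm]; exact hbdist
          linarith [hrδ, hδ, hdAr, hx, h1, h2, h3]
        -- components of p
        set w' := Submodule.orthogonalProjectionOnto ((Submodule.span ℝ {u})ᗮ) p with hw'p
        set t' : ℝ := ⟪p, u⟫ with ht'def
        have hpd : p = (w' : Euc d) + t' • u := decomp hu p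
        have ht'f : t' ≤ f w' := (mem_hyp hu f p).1 hpA
        clear_value w' t'
        have hxb : x - b = ((y - w : ((Submodule.span ℝ {u})ᗮ : Submodule ℝ (Euc d))) : Euc d)
            + m • u := by
          rw [Submodule.coe_sub, hmdef]
          nth_rewrite 1 [hxd]
          nth_rewrite 1 [hbd2]
          rw [htbeq]
          module
        have hpb : p - b = ((w' - w : ((Submodule.span ℝ {u})ᗮ : Submodule ℝ (Euc d))) : Euc d)
            + (t' - f w) • u := by
          rw [Submodule.coe_sub]
          nth_rewrite 1 [hpd]
          nth_rewrite 1 [hbd2]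
          rw [htbeq]
          module
        have hip : ⟪x - b, p - b⟫ = ⟪y - w, w' - w⟫ + m * (t' - f w) := by
          rw [hxb, hpb, inner_split hu]
        have hnpb : ‖p - b‖^2 = ‖w' - w‖^2 + (t' - f w)^2 := by
          rw [hpb, norm_add_smul_u hu]
        have hdm : dA^2 = ‖y - w‖^2 + m^2 := by
          rw [← hbdist, dist_eq_norm, hxb, norm_add_smul_u hu]
        have hmdA : m ≤ dA := by nlinarith [hdm, hm0, hdA0, sq_nonneg ‖y - w‖]
        by_cases hw'ball : w' ∈ Metric.ball w₀ δ
        · -- near case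
          have hsg : ⟪y - w, w' - w⟫ + m * (f w' - f w) ≤ m * c / 2 * ‖w' - w‖^2 :=
            superg hc0 hconc (y - w) w m (le_of_lt hm0) hNPIe hwball w' hw'ball
          have h1 : ⟪y - w, w' - w⟫ + m * (t' - f w) ≤ m * c / 2 * ‖w' - w‖^2 := by
            have h2 : m * (t' - f w) ≤ m * (f w' - f w) := by
              apply mul_le_mul_of_nonneg_left _ (le_of_lt hm0)
              linarith
            linarith [hsg, h2]
          rw [hip, hnpb]
          have h2 : 2*r*(⟪y - w, w' - w⟫ + m * (t' - f w)) ≤ 2*r*(m * c / 2 * ‖w' - w‖^2) :=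
            mul_le_mul_of_nonneg_left h1 (by linarith)
          have h3 : r * c * m ≤ m := by nlinarith [hrc, hm0]
          have h4 := mul_le_mul_of_nonneg_right h3 (sq_nonneg ‖w' - w‖)
          have h5 := mul_le_mul_of_nonneg_right hmdA (sq_nonneg ‖w' - w‖)
          have h6 : 0 ≤ dA * (t' - f w)^2 := mul_nonneg hdA0 (sq_nonneg _)
          linarith [h2, h4, h5, h6]
        · -- far case
          have hww₀ : dist w w₀ < δ/4 := by
            rw [Metric.mem_ball] at hwball
            have h1 : dist w w₀ ≤ dist b a := by rw [hw, hw₀]; exact proj_dist_le b a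
            have h2 : dist b a ≤ dist b x + dist x a := dist_triangle b x a
            have h3 : dist b x = dA := by rw [dist_comm]; exact hbdist
            linarith [hrδ]
          have hfar : 2*r ≤ ‖p - b‖ := by
            have h1 : δ ≤ dist w' w₀ := by
              rw [Metric.mem_ball] at hw'ball
              push_neg at hw'ball
              exact hw'ball
            have h2 : dist w' w₀ ≤ dist w' w + dist w w₀ := dist_triangle w' w w₀
            have h3 : dist w' w = ‖w' - w‖ := dist_eq_norm _ _
            have h4 : ‖w' - w‖ ≤ ‖p - b‖ := by
              nlinarith [hnpb, norm_nonneg (w' - w), norm_nonneg (p - b), sq_nonneg (t' - f w)]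
            linarith [hrδ]
          have hcs := real_inner_le_norm (x - b) (p - b)
          have hxbn : ‖x - b‖ = dA := by rw [← dist_eq_norm, hbdist]
          rw [hxbn] at hcs
          have h1 : 2*r*⟪x - b, p - b⟫ ≤ 2*r*(dA * ‖p - b‖) :=
            mul_le_mul_of_nonneg_left hcs (by linarith)
          have h2 : 2*r*(dA * ‖p - b‖) ≤ ‖p - b‖*(dA * ‖p - b‖) :=
            mul_le_mul_of_nonneg_right hfar (mul_nonneg hdA0 (norm_nonneg _))
          linarith [h1, h2]
      -- existence and uniqueness
      obtain ⟨b₀, hb₀A, hb₀⟩ := hAclosed.exists_infDist_eq_dist ⟨a, haA⟩ x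
      have hb₀' : dist x b₀ = dA := by rw [hdAdef]; exact hb₀.symm
      refine ⟨b₀, ⟨hb₀A, hb₀'⟩, ?_⟩
      rintro b' ⟨hb'A, hb'd⟩
      have k1 := key b' hb'A hb'd b₀ hb₀A
      have k2 := key b₀ hb₀A hb₀' b' hb'A
      have e : ⟪x - b', b₀ - b'⟫ + ⟪x - b₀, b' - b₀⟫ = ‖b₀ - b'‖^2 := by
        rw [← real_inner_self_eq_norm_sq]
        simp only [inner_sub_left, inner_sub_right]
        ring
      have en : ‖b' - b₀‖^2 = ‖b₀ - b'‖^2 := by rw [← neg_sub, norm_neg]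
      have e2 : 2*r*(⟪x - b', b₀ - b'⟫ + ⟪x - b₀, b' - b₀⟫) = 2*r*‖b₀ - b'‖^2 := by rw [e]
      have h7 : 0 < 2*r - 2*dA := by linarith
      have hΔ : ‖b₀ - b'‖^2 ≤ 0 := by nlinarith [k1, k2, e2, en, h7]
      have hΔ0 : ‖b₀ - b'‖ = 0 := by nlinarith [norm_nonneg (b₀ - b'), sq_nonneg ‖b₀ - b'‖]
      have : b₀ - b' = 0 := norm_eq_zero.mp hΔ0
      have : b₀ = b' := by
        have h := sub_eq_zero.mp this
        exact h
      exact this.symm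
  -- conclude
  have hmem : ENNReal.ofReal (r/2) ∈
      {r' : ℝ≥0∞ | ∀ x : Euc d, edist x a < r' → x ∈ unp (hypographOn u f)} := by
    intro x hx
    apply main
    rw [edist_dist] at hx
    exact (ENNReal.ofReal_lt_ofReal_iff_of_nonneg dist_nonneg).1 hx
  calc (0:ℝ≥0∞) < ENNReal.ofReal (r/2) := ENNReal.ofReal_pos.2 (by linarith)
    _ ≤ reachAt (hypographOn u f) a := le_sSup hmem
end
end

section
/- Every B₋-set has positive reach. That is: if r > 0, ψ ≤ 0 ≤ φ are Lipschitz functions on [0,r] with φ semiconcave on (0,r), ψ semiconvex on (0,r), φ(0) = ψ(0) = 0, φ′₊(0) = ψ′₊(0) = 0, then the set M = {(x,y) ∈ ℝ² : x ∈ [0,r], ψ(x) ≤ y ≤ φ(x)} has positive reach. -/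
open Metric Set MeasureTheory
open scoped RealInnerProductSpace ENNReal NNReal

noncomputable section

private lemma aux_mem_Ioo (r : ℝ) (hr : 0 < r) {x t : ℝ} (hx : x ∈ Set.Icc 0 r)
    (ht0 : 0 < t) (ht1 : t ≤ 1) : x + t * (r / 2 - x) ∈ Set.Ioo 0 r := by
  obtain ⟨h0, h1⟩ := hx
  constructor
  · nlinarith [mul_nonneg (sub_nonneg.mpr ht1) h0, mul_pos ht0 (half_pos hr)]
  · nlinarith [mul_nonneg (sub_nonneg.mpr ht1) (sub_nonneg.mpr h1), mul_pos ht0 (half_pos hr)]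

private lemma concave_mid (r : ℝ) (hr : 0 < r) (g : ℝ → ℝ)
    (hg : ConcaveOn ℝ (Set.Ioo 0 r) g) (hc : ContinuousOn g (Set.Icc 0 r))
    {s y : ℝ} (hs : s ∈ Set.Icc 0 r) (hy : y ∈ Set.Icc 0 r) :
    (g s + g y) / 2 ≤ g ((s + y) / 2) := by
  have hmid : (s + y) / 2 ∈ Set.Icc 0 r := by
    constructor
    · have := hs.1; have := hy.1; linarith
    · have := hs.2; have := hy.2; linarith
  set u : ℕ → ℝ := fun n => 1 / (n + 1) with hu
  have hu0 : ∀ n : ℕ, 0 < u n := fun n => by positivity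
  have hu1 : ∀ n : ℕ, u n ≤ 1 := by
    intro n
    have hn : (0:ℝ) ≤ (n : ℝ) := Nat.cast_nonneg n
    rw [hu]
    rw [div_le_one (by positivity)]
    linarith
  have hulim : Filter.Tendsto u Filter.atTop (nhds 0) :=
    tendsto_one_div_add_atTop_nhds_zero_nat
  have hmem : ∀ x : ℝ, x ∈ Set.Icc 0 r → ∀ n : ℕ, x + u n * (r / 2 - x) ∈ Set.Ioo 0 r :=
    fun x hx n => aux_mem_Ioo r hr hx (hu0 n) (hu1 n)
  have hseq : ∀ x : ℝ, x ∈ Set.Icc 0 r →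
      Filter.Tendsto (fun n => g (x + u n * (r / 2 - x))) Filter.atTop (nhds (g x)) := by
    intro x hx
    have h1 : Filter.Tendsto (fun n => x + u n * (r / 2 - x)) Filter.atTop (nhds x) := by
      have h := (hulim.mul_const (r / 2 - x)).const_add x
      rw [zero_mul, add_zero] at h
      exact h
    have h2 : Filter.Tendsto (fun n => x + u n * (r / 2 - x)) Filter.atTop
        (nhdsWithin x (Set.Icc 0 r)) :=
      tendsto_nhdsWithin_of_tendsto_nhds_of_eventually_within _ h1
        (Filter.Eventually.of_forall fun n => Set.Ioo_subset_Icc_self (hmem x hx n))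
    exact (hc x hx).tendsto.comp h2
  have key : ∀ n : ℕ, (g (s + u n * (r / 2 - s)) + g (y + u n * (r / 2 - y))) / 2 ≤
      g ((s + y) / 2 + u n * (r / 2 - (s + y) / 2)) := by
    intro n
    have h2 := hg.2 (hmem s hs n) (hmem y hy n)
      (by norm_num : (0:ℝ) ≤ 1/2) (by norm_num : (0:ℝ) ≤ 1/2) (by norm_num : (1:ℝ)/2 + 1/2 = 1)
    have heq : (1/2 : ℝ) • (s + u n * (r / 2 - s)) + (1/2 : ℝ) • (y + u n * (r / 2 - y)) =
        (s + y) / 2 + u n * (r / 2 - (s + y) / 2) := by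
      simp only [smul_eq_mul]; ring
    rw [heq] at h2
    simp only [smul_eq_mul] at h2
    linarith
  exact le_of_tendsto_of_tendsto' (((hseq s hs).add (hseq y hy)).div_const 2)
    (hseq _ hmid) key

set_option maxHeartbeats 2000000 in
theorem stmt16 (r : ℝ) (hr : 0 < r) (φ ψ : ℝ → ℝ)
    (horder : ∀ x ∈ Set.Icc 0 r, ψ x ≤ 0 ∧ 0 ≤ φ x)
    (hφLip : ∃ K : ℝ≥0, LipschitzOnWith K φ (Set.Icc 0 r))
    (hψLip : ∃ K : ℝ≥0, LipschitzOnWith K ψ (Set.Icc 0 r))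
    (hφsc : ∃ c : ℝ, 0 ≤ c ∧ ConcaveOn ℝ (Set.Ioo 0 r) (fun x => φ x - c / 2 * x ^ 2))
    (hψsc : ∃ c : ℝ, 0 ≤ c ∧ ConvexOn ℝ (Set.Ioo 0 r) (fun x => ψ x + c / 2 * x ^ 2))
    (hφ0 : φ 0 = 0) (hψ0 : ψ 0 = 0)
    (hφ' : HasDerivWithinAt φ 0 (Set.Icc 0 r) 0)
    (hψ' : HasDerivWithinAt ψ 0 (Set.Icc 0 r) 0) :
    0 < reach {z : Euc 2 | z 0 ∈ Set.Icc 0 r ∧ ψ (z 0) ≤ z 1 ∧ z 1 ≤ φ (z 0)} := by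

  classical
  obtain ⟨Kφ, hφL⟩ := hφLip
  obtain ⟨Kψ, hψL⟩ := hψLip
  obtain ⟨cφ, hcφ0, hφc⟩ := hφsc
  obtain ⟨cψ, hcψ0, hψc⟩ := hψsc
  set M : Set (Euc 2) := {z : Euc 2 | z 0 ∈ Set.Icc 0 r ∧ ψ (z 0) ≤ z 1 ∧ z 1 ≤ φ (z 0)}
    with hMdef
  have hφcont : ContinuousOn φ (Set.Icc 0 r) := hφL.continuousOn
  have hψcont : ContinuousOn ψ (Set.Icc 0 r) := hψL.continuousOn
  -- midpoint inequalities from semiconcavity / semiconvexity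
  have hφmid : ∀ s ∈ Set.Icc 0 r, ∀ y ∈ Set.Icc 0 r,
      (φ s + φ y) / 2 - φ ((s + y) / 2) ≤ cφ / 8 * (s - y) ^ 2 := by
    intro s hs y hy
    have h := concave_mid r hr (fun x => φ x - cφ / 2 * x ^ 2) hφc
      (hφcont.sub (Continuous.continuousOn (by continuity))) hs hy
    nlinarith [h]
  have hψmid : ∀ s ∈ Set.Icc 0 r, ∀ y ∈ Set.Icc 0 r,
      ψ ((s + y) / 2) - (ψ s + ψ y) / 2 ≤ cψ / 8 * (s - y) ^ 2 := by
    intro s hs y hy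
    have h := concave_mid r hr (fun x => -(ψ x + cψ / 2 * x ^ 2)) hψc.neg
      ((hψcont.add (Continuous.continuousOn (by continuity))).neg) hs hy
    nlinarith [h]
  -- M is closed
  obtain ⟨φt, hφtL, hφtE⟩ := hφL.extend_real
  obtain ⟨ψt, hψtL, hψtE⟩ := hψL.extend_real
  have hev : ∀ i : Fin 2, Continuous fun z : Euc 2 => z i :=
    fun i => (EuclideanSpace.proj i).continuous
  have hMclosed : IsClosed M := by
    have hMeq : M = (fun z : Euc 2 => z 0) ⁻¹' Set.Icc 0 r ∩
        {z : Euc 2 | ψt (z 0) ≤ z 1} ∩ {z : Euc 2 | z 1 ≤ φt (z 0)} := by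
      ext z
      simp only [hMdef, Set.mem_setOf_eq, Set.mem_inter_iff, Set.mem_preimage]
      constructor
      · rintro ⟨h1, h2, h3⟩
        exact ⟨⟨h1, by rw [← hψtE h1]; exact h2⟩, by rw [← hφtE h1]; exact h3⟩
      · rintro ⟨⟨h1, h2⟩, h3⟩
        exact ⟨h1, by rw [hψtE h1]; exact h2, by rw [hφtE h1]; exact h3⟩
    rw [hMeq]
    refine IsClosed.inter (IsClosed.inter (isClosed_Icc.preimage (hev 0)) ?_) ?_
    · exact isClosed_le (hψtL.continuous.comp (hev 0)) (hev 1)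
    · exact isClosed_le (hev 1) (hφtL.continuous.comp (hev 0))
  -- M is bounded, hence compact
  have hbound : ∀ x ∈ Set.Icc (0:ℝ) r, |φ x| ≤ Kφ * r ∧ |ψ x| ≤ Kψ * r := by
    intro x hx
    have h0 : (0:ℝ) ∈ Set.Icc (0:ℝ) r := ⟨le_refl 0, hr.le⟩
    have hx0 : |x| ≤ r := by
      rw [abs_of_nonneg hx.1]; exact hx.2
    constructor
    · have := hφL.dist_le_mul x hx 0 h0
      rw [hφ0, Real.dist_eq, Real.dist_eq, sub_zero, sub_zero] at this
      calc |φ x| ≤ Kφ * |x| := this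
        _ ≤ Kφ * r := by
            exact mul_le_mul_of_nonneg_left hx0 Kφ.coe_nonneg
    · have := hψL.dist_le_mul x hx 0 h0
      rw [hψ0, Real.dist_eq, Real.dist_eq, sub_zero, sub_zero] at this
      calc |ψ x| ≤ Kψ * |x| := this
        _ ≤ Kψ * r := by
            exact mul_le_mul_of_nonneg_left hx0 Kψ.coe_nonneg
  have hMbd : M ⊆ Metric.closedBall 0 (r + (Kφ * r + Kψ * r)) := by
    intro z hz
    obtain ⟨hz1, hz2, hz3⟩ := hz
    have hb := hbound (z 0) hz1
    have hz0abs : |z 0| ≤ r := by rw [abs_of_nonneg hz1.1]; exact hz1.2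
    have hz1abs : |z 1| ≤ Kφ * r + Kψ * r := by
      rw [abs_le]
      constructor
      · have : -(Kψ * r) ≤ ψ (z 0) := by
          have := hb.2; rw [abs_le] at this; exact this.1
        have hKφ : (0:ℝ) ≤ Kφ * r := mul_nonneg Kφ.coe_nonneg hr.le
        linarith
      · have : φ (z 0) ≤ Kφ * r := by
          have := hb.1; rw [abs_le] at this; exact this.2
        have hKψ : (0:ℝ) ≤ Kψ * r := mul_nonneg Kψ.coe_nonneg hr.le
        linarith
    rw [Metric.mem_closedBall, dist_zero_right]
    have hnz : ‖z‖ = Real.sqrt (‖z 0‖ ^ 2 + ‖z 1‖ ^ 2) := by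
      rw [EuclideanSpace.norm_eq]
      congr 1
      exact Fin.sum_univ_two _
    rw [hnz]
    have h1 : ‖z 0‖ ^ 2 + ‖z 1‖ ^ 2 ≤ (r + (Kφ * r + Kψ * r)) ^ 2 := by
      rw [Real.norm_eq_abs, Real.norm_eq_abs]
      nlinarith [abs_nonneg (z 0), abs_nonneg (z 1), hz0abs, hz1abs]
    calc Real.sqrt (‖z 0‖ ^ 2 + ‖z 1‖ ^ 2) ≤ Real.sqrt ((r + (Kφ * r + Kψ * r)) ^ 2) :=
          Real.sqrt_le_sqrt h1
      _ = r + (Kφ * r + Kψ * r) := Real.sqrt_sq (by positivity)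
  have hMcpt : IsCompact M :=
    Metric.isCompact_of_isClosed_isBounded hMclosed
      (Metric.isBounded_closedBall.subset hMbd)
  have hMne : M.Nonempty := by
    refine ⟨0, ?_, ?_, ?_⟩ <;> simp [hψ0, hφ0, hr.le]
  -- midpoint almost-convexity of M
  set C : ℝ := max cφ cψ / 8 + 1 with hCdef
  have hC0 : 0 < C := by
    have h1 : (0:ℝ) ≤ max cφ cψ := le_trans hcφ0 (le_max_left _ _)
    rw [hCdef]; positivity
  have hmidM : ∀ a ∈ M, ∀ b ∈ M, ∃ m' ∈ M,
      dist m' ((2:ℝ)⁻¹ • (a + b)) ≤ C * dist a b ^ 2 := by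
    intro a ha b hb
    obtain ⟨ha1, ha2, ha3⟩ := ha
    obtain ⟨hb1, hb2, hb3⟩ := hb
    set m : Euc 2 := (2:ℝ)⁻¹ • (a + b) with hmdef
    have hm0 : m 0 = (a 0 + b 0) / 2 := by
      rw [hmdef]; simp [PiLp.smul_apply, PiLp.add_apply]; ring
    have hm1 : m 1 = (a 1 + b 1) / 2 := by
      rw [hmdef]; simp [PiLp.smul_apply, PiLp.add_apply]; ring
    have hm0I : m 0 ∈ Set.Icc 0 r := by
      rw [hm0]
      constructor
      · have := ha1.1; have := hb1.1; linarith
      · have := ha1.2; have := hb1.2; linarith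
    have hψφ : ψ (m 0) ≤ φ (m 0) := le_trans (horder _ hm0I).1 (horder _ hm0I).2
    set w : ℝ := max (ψ (m 0)) (min (φ (m 0)) (m 1)) with hwdef
    set m' : Euc 2 := m + (w - m 1) • EuclideanSpace.single (1 : Fin 2) (1:ℝ) with hm'def
    have hm'0 : m' 0 = m 0 := by
      rw [hm'def]; simp [EuclideanSpace.single_apply]
    have hm'1 : m' 1 = w := by
      rw [hm'def]; simp [EuclideanSpace.single_apply]
    have hm'M : m' ∈ M := by
      refine ⟨?_, ?_, ?_⟩
      · rw [hm'0]; exact hm0I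
      · rw [hm'0, hm'1]; exact le_max_left _ _
      · rw [hm'0, hm'1]; exact max_le hψφ (min_le_left _ _)
    have hdist : dist m' m = |w - m 1| := by
      rw [dist_eq_norm]
      have : m' - m = (w - m 1) • EuclideanSpace.single (1 : Fin 2) (1:ℝ) := by
        rw [hm'def, add_sub_cancel_left]
      rw [this, norm_smul, EuclideanSpace.norm_single]
      simp [Real.norm_eq_abs]
    have hab2 : (a 0 - b 0) ^ 2 ≤ dist a b ^ 2 := by
      have hde : dist a b ^ 2 = dist (a 0) (b 0) ^ 2 + dist (a 1) (b 1) ^ 2 := by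
        rw [EuclideanSpace.dist_eq, Real.sq_sqrt (by positivity)]
        exact Fin.sum_univ_two _
      rw [hde, Real.dist_eq, sq_abs]
      nlinarith [sq_nonneg (dist (a 1) (b 1))]
    have hwb : |w - m 1| ≤ C * dist a b ^ 2 := by
      have hCb : max cφ cψ / 8 * (a 0 - b 0) ^ 2 ≤ C * dist a b ^ 2 := by
        have h1 : max cφ cψ / 8 ≤ C := by rw [hCdef]; linarith
        calc max cφ cψ / 8 * (a 0 - b 0) ^ 2 ≤ C * (a 0 - b 0) ^ 2 :=
              mul_le_mul_of_nonneg_right h1 (sq_nonneg _)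
          _ ≤ C * dist a b ^ 2 := mul_le_mul_of_nonneg_left hab2 hC0.le
      rcases le_or_gt (m 1) (φ (m 0)) with h1 | h1
      · rcases le_or_gt (ψ (m 0)) (m 1) with h2 | h2
        · have hw : w = m 1 := by rw [hwdef, min_eq_right h1, max_eq_right h2]
          rw [hw, sub_self, abs_zero]
          positivity
        · have hw : w = ψ (m 0) := by
            rw [hwdef, min_eq_right h1, max_eq_left h2.le]
          have key := hψmid (a 0) ha1 (b 0) hb1
          rw [← hm0] at key
          have hcb : cψ / 8 ≤ max cφ cψ / 8 := by
            have := le_max_right cφ cψ; linarith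
          have habs : |w - m 1| = ψ (m 0) - m 1 := by
            rw [hw, abs_of_pos (by linarith)]
          rw [habs, hm1, hm0]
          have key2 : ψ ((a 0 + b 0) / 2) - (a 1 + b 1) / 2 ≤
              cψ / 8 * (a 0 - b 0) ^ 2 := by
            rw [hm0] at key; linarith
          have : cψ / 8 * (a 0 - b 0) ^ 2 ≤ max cφ cψ / 8 * (a 0 - b 0) ^ 2 :=
            mul_le_mul_of_nonneg_right hcb (sq_nonneg _)
          linarith
      · have hw : w = φ (m 0) := by
          rw [hwdef, min_eq_left h1.le, max_eq_right hψφ]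
        have key := hφmid (a 0) ha1 (b 0) hb1
        have hcb : cφ / 8 ≤ max cφ cψ / 8 := by
          have := le_max_left cφ cψ; linarith
        have habs : |w - m 1| = m 1 - φ (m 0) := by
          rw [hw, abs_of_neg (by linarith), neg_sub]
        rw [habs, hm1, hm0]
        have key2 : (a 1 + b 1) / 2 - φ ((a 0 + b 0) / 2) ≤
            cφ / 8 * (a 0 - b 0) ^ 2 := by linarith
        have : cφ / 8 * (a 0 - b 0) ^ 2 ≤ max cφ cψ / 8 * (a 0 - b 0) ^ 2 :=
          mul_le_mul_of_nonneg_right hcb (sq_nonneg _)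
        linarith
    exact ⟨m', hm'M, by rw [hdist]; exact hwb⟩
  -- unique nearest point within distance ρ
  set ρ : ℝ := 1 / (8 * C) with hρdef
  have hρ0 : 0 < ρ := by rw [hρdef]; positivity
  have huniq : ∀ x : Euc 2, Metric.infDist x M < ρ → x ∈ unp M := by
    intro x hx
    obtain ⟨a, haM, had⟩ := hMcpt.exists_infDist_eq_dist hMne x
    have hkey : ∀ p, p ∈ M ∧ dist x p = Metric.infDist x M → p = a := by
      rintro p ⟨hpM, hpd⟩
      by_contra hpa
      set t : ℝ := Metric.infDist x M with htdef
      have ht0 : 0 ≤ t := Metric.infDist_nonneg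
      rcases eq_or_lt_of_le ht0 with h0 | h0
      · have hxa : dist x a = 0 := by rw [← had, ← h0]
        have hxp : dist x p = 0 := by rw [hpd, ← h0]
        rw [dist_eq_zero] at hxa hxp
        exact hpa (hxp.symm.trans hxa)
      · set δ : ℝ := dist a p with hδdef
        have hδ0 : 0 < δ := dist_pos.mpr fun h => hpa h.symm
        have hxat : dist x a = t := had.symm
        have hδ2t : δ ≤ 2 * t := by
          calc δ ≤ dist a x + dist x p := dist_triangle a x p
            _ = 2 * t := by rw [dist_comm a x, hxat, hpd]; ring
        obtain ⟨m', hm'M, hm'd⟩ := hmidM a haM p hpM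
        set m : Euc 2 := (2:ℝ)⁻¹ • (a + p) with hmdef
        have hxm : x - m = (2:ℝ)⁻¹ • ((x - a) + (x - p)) := by
          rw [hmdef]; module
        have hpar := parallelogram_law_with_norm ℝ (x - a) (x - p)
        have hna : ‖x - a‖ = t := by rw [← dist_eq_norm]; exact hxat
        have hnp : ‖x - p‖ = t := by rw [← dist_eq_norm]; exact hpd
        have hnap : ‖x - a - (x - p)‖ = δ := by
          have : x - a - (x - p) = p - a := by abel
          rw [this, ← dist_eq_norm, dist_comm]
        have hdxm : dist x m ^ 2 = t ^ 2 - δ ^ 2 / 4 := by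
          rw [dist_eq_norm, hxm, norm_smul]
          have h2 : ‖(2:ℝ)⁻¹‖ = 2⁻¹ := by
            rw [Real.norm_eq_abs]; norm_num
          rw [h2]
          have hsum : ‖x - a + (x - p)‖ * ‖x - a + (x - p)‖ = 4 * t ^ 2 - δ ^ 2 := by
            nlinarith [hpar, hna, hnp, hnap]
          nlinarith [hsum]
        have hq : (0:ℝ) < 8 * t := by linarith
        have hrt : 0 ≤ t - δ ^ 2 / (8 * t) := by
          rw [sub_nonneg, div_le_iff₀ hq]
          nlinarith [hδ2t, hδ0]
        have hd1 : dist x m ≤ t - δ ^ 2 / (8 * t) := by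
          have hsq : dist x m ^ 2 ≤ (t - δ ^ 2 / (8 * t)) ^ 2 := by
            rw [hdxm]
            have h24 : 2 * t * (δ ^ 2 / (8 * t)) = δ ^ 2 / 4 := by
              field_simp; ring
            nlinarith [sq_nonneg (δ ^ 2 / (8 * t))]
          calc dist x m = Real.sqrt (dist x m ^ 2) := (Real.sqrt_sq dist_nonneg).symm
            _ ≤ Real.sqrt ((t - δ ^ 2 / (8 * t)) ^ 2) := Real.sqrt_le_sqrt hsq
            _ = t - δ ^ 2 / (8 * t) := Real.sqrt_sq hrt
        have hd2 : t ≤ dist x m' := Metric.infDist_le_dist_of_mem hm'M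
        have hd3 : dist x m' ≤ dist x m + C * δ ^ 2 := by
          have hmm' : dist m m' ≤ C * δ ^ 2 := by
            rw [dist_comm m m', hδdef]
            exact hm'd
          calc dist x m' ≤ dist x m + dist m m' := dist_triangle x m m'
            _ ≤ dist x m + C * δ ^ 2 := by linarith
        have h2C : t < ρ := hx
        clear_value t δ ρ
        have hfinal : δ ^ 2 / (8 * t) ≤ C * δ ^ 2 := by
          have hstep : dist x m + C * δ ^ 2 ≤ t - δ ^ 2 / (8 * t) + C * δ ^ 2 := by
            linarith only [hd1]
          have hsum : t ≤ t - δ ^ 2 / (8 * t) + C * δ ^ 2 := le_trans hd2 (le_trans hd3 hstep)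
          linarith only [hsum]
        rw [div_le_iff₀ hq] at hfinal
        have h1C : 1 ≤ 8 * C * t := by nlinarith [pow_pos hδ0 2]
        rw [hρdef, lt_div_iff₀ (by positivity : (0:ℝ) < 8 * C)] at h2C
        nlinarith [h1C, h2C]
    exact ⟨a, ⟨haM, had.symm⟩, hkey⟩
  -- conclude
  have hle : ENNReal.ofReal ρ ≤ reach M := by
    refine le_iInf₂ fun a ha => ?_
    refine le_sSup ?_
    intro x hx
    have hda : dist x a < ρ := edist_lt_ofReal.mp hx
    exact huniq x (lt_of_le_of_lt (Metric.infDist_le_dist_of_mem ha) hda)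
  calc (0:ℝ≥0∞) < ENNReal.ofReal ρ := ENNReal.ofReal_pos.mpr hρ0
    _ ≤ reach M := hle
end
end
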